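/- Closing substitutions preserve reducibility: if Γ ⊢ M : A and σ : ℕ → term is a substitution such that Red (σ i) a whenever Γ.get? i = some a, then Red (M[σ]) A, where M[σ] is the simultaneous capture-avoiding substitution of σ i for each free de Bruijn variable i of M. -/

import Mathlib

inductive Ty : Type
  | iota : Ty
  | arr : Ty → Ty → Ty

inductive Tm : Type
  | var : ℕ → Tm
  | const : Tm
  | app : Tm → Tm → Tm
  | abs : Ty → Tm → Tm

def liftRen (ρ : ℕ → ℕ) : ℕ → ℕ
  | 0 => 0
  | n + 1 => ρ n + 1

def rename (ρ : ℕ → ℕ) : Tm → Tm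
  | Tm.var n => Tm.var (ρ n)
  | Tm.const => Tm.const
  | Tm.app m n => Tm.app (rename ρ m) (rename ρ n)
  | Tm.abs a r => Tm.abs a (rename (liftRen ρ) r)

def liftSub (σ : ℕ → Tm) : ℕ → Tm
  | 0 => Tm.var 0
  | n + 1 => rename Nat.succ (σ n)

/-- Simultaneous capture-avoiding substitution. -/
def subst (σ : ℕ → Tm) : Tm → Tm
  | Tm.var n => σ n
  | Tm.const => Tm.const
  | Tm.app m n => Tm.app (subst σ m) (subst σ n)
  | Tm.abs a r => Tm.abs a (subst (liftSub σ) r)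

/-- `subst0 s t` is `t[0 := s]`. -/
def subst0 (s : Tm) (t : Tm) : Tm :=
  subst (fun n => match n with | 0 => s | Nat.succ k => Tm.var k) t

inductive Typed : List Ty → Tm → Ty → Prop
  | var {Γ : List Ty} {n : ℕ} {a : Ty} :
      Γ[n]? = some a → Typed Γ (Tm.var n) a
  | const {Γ : List Ty} {a : Ty} : Typed Γ Tm.const a
  | app {Γ : List Ty} {m n : Tm} {a b : Ty} :
      Typed Γ m (Ty.arr a b) → Typed Γ n a → Typed Γ (Tm.app m n) b
  | abs {Γ : List Ty} {r : Tm} {a b : Ty} :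
      Typed (a :: Γ) r b → Typed Γ (Tm.abs a r) (Ty.arr a b)

/-- One-step (β) reduction. -/
inductive Step : Tm → Tm → Prop
  | beta {a : Ty} {r m : Tm} : Step (Tm.app (Tm.abs a r) m) (subst0 m r)
  | appl {m m' n : Tm} : Step m m' → Step (Tm.app m n) (Tm.app m' n)
  | appr {m n n' : Tm} : Step n n' → Step (Tm.app m n) (Tm.app m n')
  | abs {a : Ty} {r r' : Tm} : Step r r' → Step (Tm.abs a r) (Tm.abs a r')

/-- Strong normalization. -/
inductive SN : Tm → Prop
  | intro {M : Tm} : (∀ M', Step M M' → SN M') → SN M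

/-- Tait-style reducibility, by recursion on the type. -/
def Red : Tm → Ty → Prop
  | M, Ty.iota => Typed [] M Ty.iota ∧ SN M
  | M, Ty.arr a b => Typed [] M (Ty.arr a b) ∧ ∀ U, Red U a → Red (Tm.app M U) b

section Aux

/-! ### Substitution calculus -/

def scons (s : Tm) (σ : ℕ → Tm) : ℕ → Tm
  | 0 => s
  | n + 1 => σ n

lemma subst0_eq (s t : Tm) : subst0 s t = subst (scons s Tm.var) t := by
  have : (fun n => match n with | 0 => s | Nat.succ k => Tm.var k) = scons s Tm.var := by
    funext n; cases n <;> rfl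
  unfold subst0
  rw [this]

lemma rename_ext : ∀ (t : Tm) {ρ ρ' : ℕ → ℕ}, (∀ n, ρ n = ρ' n) →
    rename ρ t = rename ρ' t := by
  intro t
  induction t with
  | var n => intro ρ ρ' h; simp [rename, h]
  | const => intros; rfl
  | app m n ihm ihn => intro ρ ρ' h; simp [rename, ihm h, ihn h]
  | abs a r ih =>
    intro ρ ρ' h; simp only [rename, Tm.abs.injEq, true_and]
    apply ih; intro n; cases n with
    | zero => rfl
    | succ k => simp [liftRen, h]

lemma subst_ext : ∀ (t : Tm) {σ σ' : ℕ → Tm}, (∀ n, σ n = σ' n) →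
    subst σ t = subst σ' t := by
  intro t
  induction t with
  | var n => intro σ σ' h; simp [subst, h]
  | const => intros; rfl
  | app m n ihm ihn => intro σ σ' h; simp [subst, ihm h, ihn h]
  | abs a r ih =>
    intro σ σ' h; simp only [subst, Tm.abs.injEq, true_and]
    apply ih; intro n; cases n with
    | zero => rfl
    | succ k => simp [liftSub, h]

lemma rename_rename : ∀ (t : Tm) (ρ ρ' : ℕ → ℕ),
    rename ρ' (rename ρ t) = rename (fun n => ρ' (ρ n)) t := by
  intro t
  induction t with
  | var n => intros; rfl
  | const => intros; rfl
  | app m n ihm ihn => intro ρ ρ'; simp [rename, ihm, ihn]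
  | abs a r ih =>
    intro ρ ρ'; simp only [rename, Tm.abs.injEq, true_and]
    rw [ih]
    apply rename_ext
    intro n; cases n with
    | zero => rfl
    | succ k => simp [liftRen]

lemma subst_rename : ∀ (t : Tm) (ρ : ℕ → ℕ) (σ : ℕ → Tm),
    subst σ (rename ρ t) = subst (fun n => σ (ρ n)) t := by
  intro t
  induction t with
  | var n => intros; rfl
  | const => intros; rfl
  | app m n ihm ihn => intro ρ σ; simp [rename, subst, ihm, ihn]
  | abs a r ih =>
    intro ρ σ; simp only [rename, subst, Tm.abs.injEq, true_and]
    rw [ih]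
    apply subst_ext
    intro n; cases n with
    | zero => rfl
    | succ k => simp [liftRen, liftSub]

lemma rename_subst : ∀ (t : Tm) (σ : ℕ → Tm) (ρ : ℕ → ℕ),
    rename ρ (subst σ t) = subst (fun n => rename ρ (σ n)) t := by
  intro t
  induction t with
  | var n => intros; rfl
  | const => intros; rfl
  | app m n ihm ihn => intro σ ρ; simp [rename, subst, ihm, ihn]
  | abs a r ih =>
    intro σ ρ; simp only [rename, subst, Tm.abs.injEq, true_and]
    rw [ih]
    apply subst_ext
    intro n; cases n with
    | zero => rfl
    | succ k =>
      show rename (liftRen ρ) (rename Nat.succ (σ k)) = rename Nat.succ (rename ρ (σ k))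
      rw [rename_rename, rename_rename]
      apply rename_ext
      intro n; rfl

lemma subst_subst : ∀ (t : Tm) (σ τ : ℕ → Tm),
    subst τ (subst σ t) = subst (fun n => subst τ (σ n)) t := by
  intro t
  induction t with
  | var n => intros; rfl
  | const => intros; rfl
  | app m n ihm ihn => intro σ τ; simp [subst, ihm, ihn]
  | abs a r ih =>
    intro σ τ; simp only [subst, Tm.abs.injEq, true_and]
    rw [ih]
    apply subst_ext
    intro n; cases n with
    | zero => rfl
    | succ k =>
      show subst (liftSub τ) (rename Nat.succ (σ k)) = rename Nat.succ (subst τ (σ k))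
      rw [subst_rename, rename_subst]
      apply subst_ext
      intro n; rfl

lemma subst_id : ∀ (t : Tm), subst Tm.var t = t := by
  intro t
  induction t with
  | var n => rfl
  | const => rfl
  | app m n ihm ihn => simp [subst, ihm, ihn]
  | abs a r ih =>
    simp only [subst, Tm.abs.injEq, true_and]
    rw [← ih]
    conv_lhs => rw [ih]
    rw [← ih]
    apply subst_ext
    intro n; cases n <;> rfl

lemma subst0_subst_lift (N : Tm) (σ : ℕ → Tm) (r : Tm) :
    subst0 N (subst (liftSub σ) r) = subst (scons N σ) r := by
  rw [subst0_eq, subst_subst]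
  apply subst_ext
  intro n; cases n with
  | zero => rfl
  | succ k =>
    show subst (scons N Tm.var) (rename Nat.succ (σ k)) = σ k
    rw [subst_rename]
    exact subst_id (σ k)

/-! ### Reduction lemmas -/

lemma step_rename : ∀ {t t' : Tm}, Step t t' → ∀ (ρ : ℕ → ℕ),
    Step (rename ρ t) (rename ρ t') := by
  intro t t' h
  induction h with
  | @beta a r m =>
    intro ρ
    have : rename ρ (subst0 m r) = subst0 (rename ρ m) (rename (liftRen ρ) r) := by
      rw [subst0_eq, subst0_eq, rename_subst, subst_rename]
      apply subst_ext
      intro n; cases n <;> rfl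
    rw [this]
    exact Step.beta
  | appl _ ih => intro ρ; exact Step.appl (ih ρ)
  | appr _ ih => intro ρ; exact Step.appr (ih ρ)
  | abs _ ih => intro ρ; exact Step.abs (ih _)

lemma step_subst : ∀ {t t' : Tm}, Step t t' → ∀ (σ : ℕ → Tm),
    Step (subst σ t) (subst σ t') := by
  intro t t' h
  induction h with
  | @beta a r m =>
    intro σ
    have : subst σ (subst0 m r) = subst0 (subst σ m) (subst (liftSub σ) r) := by
      rw [subst0_eq, subst0_eq, subst_subst, subst_subst]
      apply subst_ext
      intro n; cases n with
      | zero => rfl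
      | succ k =>
        show σ k = subst (scons (subst σ m) Tm.var) (rename Nat.succ (σ k))
        rw [subst_rename]
        exact (subst_id (σ k)).symm
    rw [this]
    exact Step.beta
  | appl _ ih => intro σ; exact Step.appl (ih σ)
  | appr _ ih => intro σ; exact Step.appr (ih σ)
  | abs _ ih => intro σ; exact Step.abs (ih _)

abbrev Steps := Relation.ReflTransGen Step

lemma steps_appl {m m' n : Tm} (h : Steps m m') : Steps (Tm.app m n) (Tm.app m' n) :=
  Relation.ReflTransGen.lift (fun x => Tm.app x n) (fun _ _ h => Step.appl h) _ _ h

lemma steps_appr {m n n' : Tm} (h : Steps n n') : Steps (Tm.app m n) (Tm.app m n') :=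
  Relation.ReflTransGen.lift (fun x => Tm.app m x) (fun _ _ h => Step.appr h) _ _ h

lemma steps_abs {a : Ty} {r r' : Tm} (h : Steps r r') : Steps (Tm.abs a r) (Tm.abs a r') :=
  Relation.ReflTransGen.lift (fun x => Tm.abs a x) (fun _ _ h => Step.abs h) _ _ h

lemma steps_rename {t t' : Tm} (h : Steps t t') (ρ : ℕ → ℕ) :
    Steps (rename ρ t) (rename ρ t') :=
  Relation.ReflTransGen.lift (rename ρ) (fun _ _ h => step_rename h ρ) _ _ h

lemma subst_steps : ∀ (t : Tm) {σ τ : ℕ → Tm}, (∀ n, Steps (σ n) (τ n)) →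
    Steps (subst σ t) (subst τ t) := by
  intro t
  induction t with
  | var n => intro σ τ h; exact h n
  | const => intro σ τ h; exact Relation.ReflTransGen.refl
  | app m n ihm ihn =>
    intro σ τ h
    exact Relation.ReflTransGen.trans (steps_appl (ihm h)) (steps_appr (ihn h))
  | abs a r ih =>
    intro σ τ h
    apply steps_abs
    apply ih
    intro n; cases n with
    | zero => exact Relation.ReflTransGen.refl
    | succ k => exact steps_rename (h k) Nat.succ

/-! ### Typing lemmas -/

lemma typed_rename : ∀ {Γ : List Ty} {t : Tm} {a : Ty}, Typed Γ t a →
    ∀ {Δ : List Ty} {ρ : ℕ → ℕ}, (∀ n b, Γ[n]? = some b → Δ[ρ n]? = some b) →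
    Typed Δ (rename ρ t) a := by
  intro Γ t a h
  induction h with
  | var hv => intro Δ ρ hρ; exact Typed.var (hρ _ _ hv)
  | const => intros; exact Typed.const
  | app _ _ ihm ihn => intro Δ ρ hρ; exact Typed.app (ihm hρ) (ihn hρ)
  | @abs Γ r a b _ ih =>
    intro Δ ρ hρ
    apply Typed.abs
    apply ih
    intro n c hc
    cases n with
    | zero => exact hc
    | succ k => exact hρ k c hc

lemma typed_subst : ∀ {Γ : List Ty} {t : Tm} {a : Ty}, Typed Γ t a →
    ∀ {Δ : List Ty} {σ : ℕ → Tm}, (∀ n b, Γ[n]? = some b → Typed Δ (σ n) b) →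
    Typed Δ (subst σ t) a := by
  intro Γ t a h
  induction h with
  | var hv => intro Δ σ hσ; exact hσ _ _ hv
  | const => intros; exact Typed.const
  | app _ _ ihm ihn => intro Δ σ hσ; exact Typed.app (ihm hσ) (ihn hσ)
  | @abs Γ r a b _ ih =>
    intro Δ σ hσ
    apply Typed.abs
    apply ih
    intro n c hc
    cases n with
    | zero => exact Typed.var hc
    | succ k =>
      show Typed (a :: Δ) (rename Nat.succ (σ k)) c
      exact typed_rename (hσ k c hc) (fun n b hb => hb)

lemma subject_reduction : ∀ {t t' : Tm}, Step t t' →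
    ∀ {Γ : List Ty} {a : Ty}, Typed Γ t a → Typed Γ t' a := by
  intro t t' h
  induction h with
  | @beta a r m =>
    intro Γ b ht
    cases ht with
    | app hm hn =>
      cases hm with
      | abs hr =>
        rw [subst0_eq]
        apply typed_subst hr
        intro n c hc
        cases n with
        | zero => cases hc; exact hn
        | succ k => exact Typed.var hc
  | appl _ ih =>
    intro Γ b ht
    cases ht with
    | app hm hn => exact Typed.app (ih hm) hn
  | appr _ ih =>
    intro Γ b ht
    cases ht with
    | app hm hn => exact Typed.app hm (ih hn)
  | abs _ ih =>
    intro Γ b ht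
    cases ht with
    | abs hr => exact Typed.abs (ih hr)

/-! ### SN lemmas -/

lemma sn_of_sn_app_left : ∀ {m : Tm}, ∀ {n : Tm}, SN (Tm.app m n) → SN m := by
  intro m n h
  generalize hmn : Tm.app m n = t at h
  induction h generalizing m n with
  | @intro t h ih =>
    subst hmn
    exact SN.intro (fun m' hm' => ih _ (Step.appl hm') rfl)

lemma sn_of_sn_subst : ∀ {t : Tm} {σ : ℕ → Tm}, SN (subst σ t) → SN t := by
  intro t σ h
  generalize hs : subst σ t = s at h
  induction h generalizing t with
  | @intro s h ih =>
    subst hs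
    exact SN.intro (fun t' ht' => ih _ (step_subst ht' σ) rfl)

lemma sn_const : SN Tm.const := SN.intro (fun _ h => by cases h)

/-! ### Reducibility (CR) properties -/

lemma red_typed : ∀ {A : Ty} {M : Tm}, Red M A → Typed [] M A := by
  intro A
  cases A with
  | iota => intro M h; exact h.1
  | arr a b => intro M h; exact h.1

def Neutral : Tm → Prop
  | Tm.abs _ _ => False
  | _ => True

lemma CR : ∀ (A : Ty),
    (∀ M, Red M A → SN M) ∧
    (∀ M M', Red M A → Step M M' → Red M' A) ∧
    (∀ M, Typed [] M A → Neutral M → (∀ M', Step M M' → Red M' A) → Red M A) ∧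
    Red Tm.const A := by
  intro A
  induction A with
  | iota =>
    refine ⟨fun M h => h.2, ?_, ?_, Typed.const, sn_const⟩
    · rintro M M' ⟨ht, hsn⟩ hstep
      refine ⟨subject_reduction hstep ht, ?_⟩
      cases hsn with
      | intro h => exact h M' hstep
    · intro M ht _ hred
      exact ⟨ht, SN.intro (fun M' h => ((hred M' h).2 : SN M'))⟩
  | arr a b iha ihb =>
    obtain ⟨cr1a, cr2a, cr3a, hca⟩ := iha
    obtain ⟨cr1b, cr2b, cr3b, hcb⟩ := ihb
    have cr3 : ∀ M, Typed [] M (Ty.arr a b) → Neutral M →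
        (∀ M', Step M M' → Red M' (Ty.arr a b)) → Red M (Ty.arr a b) := by
      have key : ∀ U, SN U → Red U a → ∀ M, Typed [] M (Ty.arr a b) → Neutral M →
          (∀ M', Step M M' → Red M' (Ty.arr a b)) → Red (Tm.app M U) b := by
        intro U hsnU
        induction hsnU with
        | @intro U hsnU ihU =>
          intro hU M ht hneut hred
          apply cr3b
          · exact Typed.app ht (red_typed hU)
          · trivial
          · intro M' hstep
            cases hstep with
            | beta => exact absurd hneut (by simp [Neutral])
            | appl h => exact (hred _ h).2 U hU
            | appr h => exact ihU _ h (cr2a U _ hU h) M ht hneut hred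
      intro M ht hneut hred
      exact ⟨ht, fun U hU => key U (cr1a U hU) hU M ht hneut hred⟩
    have cr2 : ∀ M M', Red M (Ty.arr a b) → Step M M' → Red M' (Ty.arr a b) := by
      rintro M M' ⟨ht, hf⟩ hstep
      refine ⟨subject_reduction hstep ht, ?_⟩
      intro U hU
      exact cr2b _ _ (hf U hU) (Step.appl hstep)
    have hc : Red Tm.const (Ty.arr a b) := by
      apply cr3
      · exact Typed.const
      · trivial
      · intro M' h; cases h
    refine ⟨?_, cr2, cr3, hc⟩
    intro M hM
    have : SN (Tm.app M Tm.const) := cr1b _ (hM.2 Tm.const hca)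
    exact sn_of_sn_app_left this

lemma red_steps : ∀ {A : Ty} {M M' : Tm}, Red M A → Steps M M' → Red M' A := by
  intro A M M' h hs
  induction hs with
  | refl => exact h
  | tail _ hstep ih => exact (CR _).2.1 _ _ ih hstep

lemma red_const (A : Ty) : Red Tm.const A := (CR A).2.2.2

/-! ### Head expansion -/

lemma head_exp : ∀ {a b : Ty} {r : Tm}, SN r → ∀ {N : Tm}, SN N →
    Typed [a] r b → Red N a → Red (subst0 N r) b → Red (Tm.app (Tm.abs a r) N) b := by
  intro a b r hsnr
  induction hsnr with
  | @intro r hsnr ihr =>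
    intro N hsnN
    induction hsnN with
    | @intro N hsnN ihN =>
      intro hr hN hred
      apply (CR b).2.2.1
      · exact Typed.app (Typed.abs hr) (red_typed hN)
      · trivial
      · intro M' hstep
        cases hstep with
        | beta => exact hred
        | appl h =>
          cases h with
          | abs h =>
            apply ihr _ h (SN.intro hsnN)
            · exact subject_reduction h hr
            · exact hN
            · apply (CR b).2.1 _ _ hred
              rw [subst0_eq, subst0_eq]
              exact step_subst h _
        | appr h =>
          apply ihN _ h
          · exact hr
          · exact (CR a).2.1 _ _ hN h
          · apply red_steps hred
            rw [subst0_eq, subst0_eq]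
            apply subst_steps
            intro n; cases n with
            | zero => exact Relation.ReflTransGen.single h
            | succ k => exact Relation.ReflTransGen.refl


theorem red_subst {Γ : List Ty} {M : Tm} {A : Ty} {σ : ℕ → Tm}
    (ht : Typed Γ M A) (hσ : ∀ (i : ℕ) (a : Ty), Γ[i]? = some a → Red (σ i) a) :
    Red (subst σ M) A := by
  induction ht generalizing σ with
  | var hv => exact hσ _ _ hv
  | const => exact red_const _
  | app hm hn ihm ihn => exact (ihm hσ).2 _ (ihn hσ)
  | @abs Γ r a b hr ih =>
    have htyped : Typed [a] (subst (liftSub σ) r) b := by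
      apply typed_subst hr
      intro n c hc
      cases n with
      | zero => exact Typed.var hc
      | succ k =>
        show Typed [a] (rename Nat.succ (σ k)) c
        have : Typed [] (σ k) c := red_typed (hσ k c hc)
        exact typed_rename this (by intro n b hb; simp at hb)
    refine ⟨Typed.abs htyped, ?_⟩
    intro U hU
    have hredsub : Red (subst0 U (subst (liftSub σ) r)) b := by
      rw [subst0_subst_lift]
      apply ih
      intro i c hc
      cases i with
      | zero => cases hc; exact hU
      | succ k => exact hσ k c hc
    apply head_exp
    · exact sn_of_sn_subst ((CR b).1 _ hredsub)
    · exact (CR a).1 _ hU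
    · exact htyped
    · exact hU
    · exact hredsub
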